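/- arXiv:1710.07460 — 11 statements merged into one kernel-verified Lean document; each statement's English description precedes it below -/
import Mathlib

section
/- For integers 1 < p < k̄, the inequality 1/((p-1)·(p-1)!) > k̄/((k̄-1)·(k̄-1)!) + Σ_{h=1}^{k̄-1-p} 1/(k̄-h-1)! holds. -/
lemma sum_reindex_aux (p k : ℕ) (hp : 1 ≤ p) :
    ∑ h ∈ Finset.Icc 1 (k - 1 - p), (1 : ℝ) / ((Nat.factorial (k - h - 1) : ℕ) : ℝ) =
      ∑ j ∈ Finset.Icc p (k - 2), (1 : ℝ) / (Nat.factorial j : ℝ) := by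
  refine Finset.sum_nbij' (fun h => k - h - 1) (fun j => k - j - 1) ?_ ?_ ?_ ?_ ?_
  · intro h hh; rw [Finset.mem_Icc] at hh ⊢; omega
  · intro j hj; simp only [Finset.mem_Icc] at *; omega
  · intro h hh; simp only [Finset.mem_Icc] at hh; omega
  · intro j hj; simp only [Finset.mem_Icc] at hj; omega
  · intro h hh; rfl

theorem stmt_0 (p k : ℕ) (hp : 1 < p) (hpk : p < k) :
    (1 : ℝ) / (((p - 1) * Nat.factorial (p - 1) : ℕ) : ℝ) >
      (k : ℝ) / (((k - 1) * Nat.factorial (k - 1) : ℕ) : ℝ) +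
        ∑ h ∈ Finset.Icc 1 (k - 1 - p), (1 : ℝ) / ((Nat.factorial (k - h - 1) : ℕ) : ℝ) := by
  rw [sum_reindex_aux _ _ (by omega)]
  obtain ⟨q, rfl⟩ : ∃ q, p = q + 2 := ⟨p - 2, by omega⟩
  induction k with
  | zero => omega
  | succ k ih =>
    rcases Nat.lt_or_ge (q + 2) k with hk | hk
    · -- inductive step
      have ih' := ih hk
      obtain ⟨m, rfl⟩ : ∃ m, k = m + 3 := ⟨k - 3, by omega⟩
      have hks : Finset.Icc (q + 2) (m + 3 + 1 - 2) = Finset.Icc (q + 2) ((m + 1) + 1) := by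
        congr 1
      rw [hks, Finset.sum_Icc_succ_top (by omega : q + 2 ≤ (m + 1) + 1)]
      have hm1 : m + 3 + 1 - 1 = m + 3 := rfl
      have hm2 : m + 3 - 1 = m + 2 := rfl
      have hm3 : m + 3 - 2 = m + 1 := rfl
      rw [hm1] at *
      rw [hm2, hm3] at ih'
      refine lt_of_le_of_lt ?_ ih'
      have key : ((m + 3 + 1 : ℕ) : ℝ) / (((m + 3) * Nat.factorial (m + 3) : ℕ) : ℝ)
          + (1 : ℝ) / (Nat.factorial (m + 2) : ℝ)
          ≤ ((m + 3 : ℕ) : ℝ) / (((m + 2) * Nat.factorial (m + 2) : ℕ) : ℝ) := by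
        have hfact : Nat.factorial (m + 3) = (m + 3) * Nat.factorial (m + 2) :=
          Nat.factorial_succ (m + 2)
        have ha : (0 : ℝ) < (Nat.factorial (m + 2) : ℝ) := by positivity
        rw [hfact]
        push_cast
        rw [div_add_div _ _ (by positivity) (by positivity),
          div_le_div_iff₀ (by positivity) (by positivity)]
        ring_nf
        nlinarith [ha, sq_nonneg ((m : ℝ) + 1), Nat.one_le_iff_ne_zero.mpr (Nat.factorial_ne_zero (m + 2)), (by exact_mod_cast Nat.one_le_iff_ne_zero.mpr (Nat.factorial_ne_zero (m + 2)) : (1:ℝ) ≤ (Nat.factorial (m+2) : ℝ))]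
      push_cast at key ⊢
      linarith
    · -- base case k + 1 = p + 1
      have hkq : k = q + 2 := by omega
      subst hkq
      have he : Finset.Icc (q + 2) (q + 2 + 1 - 2) = ∅ := by
        apply Finset.Icc_eq_empty; omega
      rw [he, Finset.sum_empty, add_zero]
      have h1 : q + 2 - 1 = q + 1 := by omega
      have h2 : q + 2 + 1 - 1 = q + 2 := by omega
      rw [h1, h2]
      have hf : (Nat.factorial (q + 1) : ℝ) > 0 := by positivity
      rw [Nat.factorial_succ (q + 1)]
      push_cast
      rw [gt_iff_lt, div_lt_div_iff₀ (by positivity) (by positivity)]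
      nlinarith [hf]
end

section
/- For every integer k ≥ 2 and every j with 1 ≤ j ≤ k-1, the function f*_k(j) = (j-1)! · (1/((k-1)(k-1)!) + Σ_{i=j}^{k-1} 1/i!) / (1/((k-1)(k-1)!) + Σ_{i=1}^{k-1} 1/i!) satisfies f*_k(j+1) ≤ f*_k(j), i.e. f*_k is non-increasing on [1,k]. -/
/-- The optimal distribution rule `f*_k(j)` for covering games of cardinality `k`. -/
noncomputable def fstar (k j : ℕ) : ℝ :=
  (Nat.factorial (j - 1) : ℝ) *
    (1 / (((k - 1) * Nat.factorial (k - 1) : ℕ) : ℝ) +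
      ∑ i ∈ Finset.Icc j (k - 1), (1 : ℝ) / (Nat.factorial i : ℝ)) /
  (1 / (((k - 1) * Nat.factorial (k - 1) : ℕ) : ℝ) +
      ∑ i ∈ Finset.Icc 1 (k - 1), (1 : ℝ) / (Nat.factorial i : ℝ))

lemma fstar_key_telescope (j : ℕ) (hj : 1 ≤ j) (n : ℕ) (hn : j ≤ n) :
    1 / ((n * Nat.factorial n : ℕ) : ℝ) +
      ∑ i ∈ Finset.Icc (j + 1) n, (1 : ℝ) / (Nat.factorial i : ℝ) ≤
    1 / ((j * Nat.factorial j : ℕ) : ℝ) := by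
  induction n, hn using Nat.le_induction with
  | base => simp [Finset.Icc_eq_empty_of_lt (Nat.lt_succ_self j)]
  | succ n hn ih =>
    have hn1 : 1 ≤ n := le_trans hj hn
    rw [Finset.sum_Icc_succ_top (by omega)]
    have hF : (0:ℝ) < (Nat.factorial n : ℝ) := by positivity
    have hncast : (1:ℝ) ≤ (n:ℝ) := by exact_mod_cast hn1
    have hstep : 1 / (((n+1) * Nat.factorial (n+1) : ℕ) : ℝ)
        + (1:ℝ) / (Nat.factorial (n+1) : ℝ)
        ≤ 1 / ((n * Nat.factorial n : ℕ) : ℝ) := by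
      rw [Nat.factorial_succ]
      push_cast
      have h1 : (0:ℝ) < ((n:ℝ) + 1) * (((n:ℝ) + 1) * (Nat.factorial n : ℝ)) := by positivity
      have h2 : (0:ℝ) < (n:ℝ) * (Nat.factorial n : ℝ) := by nlinarith
      rw [div_add_div _ _ (by positivity) (by positivity),
        div_le_div_iff₀ (by positivity) h2]
      nlinarith [hF, hncast, mul_pos (mul_pos (show (0:ℝ) < (n:ℝ)+1 by linarith) hF) hF]
    calc 1 / (((n+1) * Nat.factorial (n+1) : ℕ) : ℝ)
        + ((∑ i ∈ Finset.Icc (j + 1) n, (1 : ℝ) / (Nat.factorial i : ℝ))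
          + (1:ℝ) / (Nat.factorial (n+1) : ℝ))
        ≤ 1 / ((n * Nat.factorial n : ℕ) : ℝ)
          + ∑ i ∈ Finset.Icc (j + 1) n, (1 : ℝ) / (Nat.factorial i : ℝ) := by
          linarith [hstep]
      _ ≤ 1 / ((j * Nat.factorial j : ℕ) : ℝ) := ih

theorem stmt_1 (k : ℕ) (hk : 2 ≤ k) (j : ℕ) (hj1 : 1 ≤ j) (hj2 : j ≤ k - 1) :
    fstar k (j + 1) ≤ fstar k j := by
  unfold fstar
  set n := k - 1 with hn
  have hjn : j ≤ n := hj2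
  have hn1 : 1 ≤ n := le_trans hj1 hjn
  have hDpos : (0:ℝ) < 1 / ((n * Nat.factorial n : ℕ) : ℝ) +
      ∑ i ∈ Finset.Icc 1 n, (1 : ℝ) / (Nat.factorial i : ℝ) := by
    apply add_pos_of_pos_of_nonneg
    · have : 0 < n * Nat.factorial n := Nat.mul_pos hn1 (Nat.factorial_pos n)
      have : (0:ℝ) < ((n * Nat.factorial n : ℕ) : ℝ) := by exact_mod_cast this
      positivity
    · exact Finset.sum_nonneg fun i _ => by positivity
  rw [div_le_div_iff_of_pos_right hDpos]
  -- split the sum Icc j n = {j} ∪ Icc (j+1) n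
  have hsplit : Finset.Icc j n = insert j (Finset.Icc (j + 1) n) := by
    rw [Finset.Icc_add_one_left_eq_Ioc, Finset.Ioc_insert_left hjn]
  rw [hsplit, Finset.sum_insert (by simp)]
  simp only [Nat.add_sub_cancel]
  set a : ℝ := 1 / ((n * Nat.factorial n : ℕ) : ℝ) +
      ∑ i ∈ Finset.Icc (j + 1) n, (1 : ℝ) / (Nat.factorial i : ℝ) with ha
  have hkey : a ≤ 1 / ((j * Nat.factorial j : ℕ) : ℝ) := fstar_key_telescope j hj1 n hjn
  have ha0 : 0 ≤ a := by
    apply add_nonneg (by positivity)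
    exact Finset.sum_nonneg fun i _ => by positivity
  set F : ℝ := (Nat.factorial (j - 1) : ℝ) with hF
  have hFpos : (0:ℝ) < F := by positivity
  have hfact : (Nat.factorial j : ℝ) = (j : ℝ) * F := by
    rw [hF]; exact_mod_cast (Nat.mul_factorial_pred (Nat.one_le_iff_ne_zero.mp hj1)).symm
  have hjpos : (0:ℝ) < (j : ℝ) := by exact_mod_cast hj1
  have hkey' : a * ((j:ℝ) * ((j:ℝ) * F)) ≤ 1 := by
    have hc : ((j * Nat.factorial j : ℕ) : ℝ) = (j:ℝ) * ((j:ℝ) * F) := by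
      push_cast [hfact]; ring
    rw [hc] at hkey
    have hpos : (0:ℝ) < (j:ℝ) * ((j:ℝ) * F) := by positivity
    calc a * ((j:ℝ) * ((j:ℝ) * F)) ≤ 1 / ((j:ℝ) * ((j:ℝ) * F)) * ((j:ℝ) * ((j:ℝ) * F)) :=
          mul_le_mul_of_nonneg_right hkey hpos.le
      _ = 1 := by field_simp
  rw [hfact]
  have hregroup : 1 / ((n * Nat.factorial n : ℕ) : ℝ) + (1 / ((j:ℝ) * F) +
      ∑ i ∈ Finset.Icc (j + 1) n, (1 : ℝ) / (Nat.factorial i : ℝ)) = 1 / ((j:ℝ) * F) + a := by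
    rw [ha]; ring
  rw [hregroup]
  have hinv : ((j:ℝ) * F) * (1 / ((j:ℝ) * F)) = 1 := by
    field_simp
  have h2 : (j:ℝ) * (F * (1 / ((j:ℝ) * F) + a)) = 1 + (j:ℝ) * (F * a) := by
    rw [mul_add, mul_add, ← mul_assoc, hinv]
  have h1 : (j:ℝ) * ((j:ℝ) * F * a) ≤ 1 := by
    calc (j:ℝ) * ((j:ℝ) * F * a) = a * ((j:ℝ) * ((j:ℝ) * F)) := by ring
      _ ≤ 1 := hkey'
  have h3 : 0 ≤ (j:ℝ) * (F * a) := mul_nonneg hjpos.le (mul_nonneg hFpos.le ha0)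
  have h4 : (j:ℝ) * ((j:ℝ) * F * a) ≤ (j:ℝ) * (F * (1 / ((j:ℝ) * F) + a)) := by
    rw [h2]; linarith
  exact le_of_mul_le_mul_left h4 hjpos
end

section
/- For every integer k ≥ 2 and every j with 1 ≤ j ≤ k, the distribution rule f*_k satisfies j · f*_k(j) ≤ 1. -/
open Finset

lemma telesc (n j : ℕ) (hj : j ≤ n) :
    ∑ i ∈ Icc (j+1) n, ((1:ℝ)/(Nat.factorial (i-1)) - 1/(Nat.factorial i))
      = 1/(Nat.factorial j) - 1/(Nat.factorial n) := by
  rw [← Finset.Ico_add_one_right_eq_Icc, Finset.sum_Ico_eq_sum_range]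
  have h : ∀ i ∈ range (n+1-(j+1)),
      ((1:ℝ)/(Nat.factorial (j+1+i-1)) - 1/(Nat.factorial (j+1+i)))
      = (1:ℝ)/(Nat.factorial (j+i)) - 1/(Nat.factorial (j+(i+1))) := by
    intro i _
    rw [show j+1+i-1 = j+i from by omega, show j+1+i = j+(i+1) from by omega]
  have hts := Finset.sum_range_sub' (fun m => (1:ℝ)/(Nat.factorial (j+m))) (n+1-(j+1))
  rw [Finset.sum_congr rfl h, hts, show j+(n+1-(j+1)) = n from by omega, Nat.add_zero]

lemma key (n j : ℕ) (h1 : 1 ≤ j) (h2 : j ≤ n) :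
    (j:ℝ) * (1/(((n * Nat.factorial n : ℕ)):ℝ) + ∑ i ∈ Icc (j+1) n, (1:ℝ)/(Nat.factorial i))
      ≤ 1 / Nat.factorial j := by
  have hfn : (0:ℝ) < Nat.factorial n := by positivity
  have hn0 : (0:ℝ) < n := by exact_mod_cast (show 0 < n by omega)
  rw [mul_add]
  have hA : (j:ℝ) * (1/(((n * Nat.factorial n : ℕ)):ℝ)) ≤ 1 / Nat.factorial n := by
    push_cast
    rw [mul_one_div, div_le_div_iff₀ (by positivity) hfn]
    have : (j:ℝ) ≤ n := by exact_mod_cast h2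
    nlinarith
  have hB : (j:ℝ) * ∑ i ∈ Icc (j+1) n, (1:ℝ)/(Nat.factorial i)
      ≤ 1/(Nat.factorial j) - 1/(Nat.factorial n) := by
    rw [← telesc n j h2, Finset.mul_sum]
    apply Finset.sum_le_sum
    intro i hi
    simp only [mem_Icc] at hi
    have hfactn : Nat.factorial i = i * Nat.factorial (i-1) := by
      cases i with
      | zero => omega
      | succ m => simp [Nat.factorial_succ]
    have hfi : (0:ℝ) < Nat.factorial i := by positivity
    have hfi1 : (0:ℝ) < Nat.factorial (i-1) := by positivity
    have h1' : (1:ℝ)/(Nat.factorial (i-1)) = i / Nat.factorial i := by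
      rw [div_eq_div_iff (ne_of_gt hfi1) (ne_of_gt hfi), one_mul]
      exact_mod_cast hfactn
    rw [mul_one_div, h1', ← sub_div]
    have hji : (j:ℝ) ≤ (i:ℝ) - 1 := by
      have : (j:ℝ) + 1 ≤ i := by exact_mod_cast hi.1
      linarith
    gcongr
  linarith

lemma main_ind (n : ℕ) (j : ℕ) (h1 : 1 ≤ j) (h2 : j ≤ n + 1) :
    (Nat.factorial j : ℝ) * (1/(((n * Nat.factorial n : ℕ)):ℝ) + ∑ i ∈ Icc j n, (1:ℝ)/(Nat.factorial i))
      ≤ 1/(((n * Nat.factorial n : ℕ)):ℝ) + ∑ i ∈ Icc 1 n, (1:ℝ)/(Nat.factorial i) := by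
  induction j, h1 using Nat.le_induction with
  | base => simp [Nat.factorial]
  | succ j hj ih =>
    have hjn : j ≤ n := by omega
    have step : (Nat.factorial (j+1) : ℝ) * (1/(((n * Nat.factorial n : ℕ)):ℝ) + ∑ i ∈ Icc (j+1) n, (1:ℝ)/(Nat.factorial i))
        ≤ (Nat.factorial j : ℝ) * (1/(((n * Nat.factorial n : ℕ)):ℝ) + ∑ i ∈ Icc j n, (1:ℝ)/(Nat.factorial i)) := by
      have hsplit : ∑ i ∈ Icc j n, (1:ℝ)/(Nat.factorial i)
          = 1/(Nat.factorial j) + ∑ i ∈ Icc (j+1) n, (1:ℝ)/(Nat.factorial i) := by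
        rw [Finset.Icc_add_one_left_eq_Ioc, ← Finset.Ioc_insert_left hjn, Finset.sum_insert (by simp)]
      have hk := key n j hj hjn
      have hfj : (0:ℝ) < Nat.factorial j := by positivity
      have hfs : (Nat.factorial (j+1) : ℝ) = (j+1) * Nat.factorial j := by
        push_cast [Nat.factorial_succ]; ring
      rw [hsplit, hfs]
      have hC : (0:ℝ) ≤ 1/(((n * Nat.factorial n : ℕ)):ℝ) + ∑ i ∈ Icc (j+1) n, (1:ℝ)/(Nat.factorial i) := by
        positivity
      nlinarith [hk, hfj, hC]
    exact le_trans step (ih (by omega))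


theorem stmt_3 (k : ℕ) (hk : 2 ≤ k) (j : ℕ) (hj1 : 1 ≤ j) (hj2 : j ≤ k) :
    (j : ℝ) * fstar k j ≤ 1 := by
  have hfn : (0:ℝ) < (((k-1) * Nat.factorial (k-1) : ℕ):ℝ) := by
    have : 0 < (k-1) * Nat.factorial (k-1) := Nat.mul_pos (by omega) (Nat.factorial_pos _)
    exact_mod_cast this
  have hs : (0:ℝ) ≤ ∑ i ∈ Icc 1 (k-1), (1:ℝ)/(Nat.factorial i) :=
    Finset.sum_nonneg (fun i _ => by positivity)
  have hD : (0:ℝ) < 1/(((k-1) * Nat.factorial (k-1) : ℕ):ℝ)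
      + ∑ i ∈ Icc 1 (k-1), (1:ℝ)/(Nat.factorial i) :=
    add_pos_of_pos_of_nonneg (one_div_pos.mpr hfn) hs
  have hjf : ((Nat.factorial j):ℝ) = j * Nat.factorial (j-1) := by
    cases j with
    | zero => omega
    | succ m => push_cast [Nat.factorial_succ]; simp
  have hkey := main_ind (k-1) j hj1 (by omega)
  have heq : (j : ℝ) * fstar k j
      = (Nat.factorial j : ℝ) * (1/(((k-1) * Nat.factorial (k-1) : ℕ):ℝ)
          + ∑ i ∈ Icc j (k-1), (1:ℝ)/(Nat.factorial i))
        / (1/(((k-1) * Nat.factorial (k-1) : ℕ):ℝ)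
          + ∑ i ∈ Icc 1 (k-1), (1:ℝ)/(Nat.factorial i)) := by
    unfold fstar
    rw [hjf]
    ring
  rw [heq, div_le_one hD]
  exact hkey
end

section
/- For every integer k ≥ 2 and every j with 1 ≤ j ≤ k-1, the distribution rule f*_k satisfies the recursion j·f*_k(j) - f*_k(j+1) = (k-1)·f*_k(k). -/
theorem stmt_4 (k : ℕ) (hk : 2 ≤ k) (j : ℕ) (hj1 : 1 ≤ j) (hj2 : j ≤ k - 1) :
    (j : ℝ) * fstar k j - fstar k (j + 1) = ((k - 1 : ℕ) : ℝ) * fstar k k := by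
  have hNpos : 0 < ((k - 1) * Nat.factorial (k - 1) : ℕ) :=
    Nat.mul_pos (by omega) (Nat.factorial_pos _)
  have hN : (0:ℝ) < (((k - 1) * Nat.factorial (k - 1) : ℕ) : ℝ) := by
    exact_mod_cast hNpos
  have hSpos : (0:ℝ) ≤ ∑ i ∈ Finset.Icc 1 (k - 1), (1 : ℝ) / (Nat.factorial i : ℝ) := by
    positivity
  have hD : (0:ℝ) < 1 / (((k - 1) * Nat.factorial (k - 1) : ℕ) : ℝ) +
      ∑ i ∈ Finset.Icc 1 (k - 1), (1 : ℝ) / (Nat.factorial i : ℝ) := by positivity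
  have hempty : Finset.Icc k (k - 1) = ∅ := Finset.Icc_eq_empty (by omega)
  have hsplit : ∑ i ∈ Finset.Icc j (k - 1), (1 : ℝ) / (Nat.factorial i : ℝ)
      = 1 / (Nat.factorial j : ℝ) +
        ∑ i ∈ Finset.Icc (j + 1) (k - 1), (1 : ℝ) / (Nat.factorial i : ℝ) := by
    rw [Finset.Icc_add_one_left_eq_Ioc, ← Finset.Ioc_insert_left hj2,
      Finset.sum_insert (by simp [Finset.mem_Ioc])]
  have hjf : (j : ℝ) * (Nat.factorial (j - 1) : ℝ) = (Nat.factorial j : ℝ) := by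
    exact_mod_cast congrArg (Nat.cast : ℕ → ℝ) (Nat.mul_factorial_pred (Nat.one_le_iff_ne_zero.mp hj1))
  have hfj : ((Nat.factorial j : ℕ) : ℝ) ≠ 0 := by
    exact_mod_cast (Nat.factorial_pos j).ne'
  have hkf : ((k - 1 : ℕ) : ℝ) * (Nat.factorial (k - 1) : ℝ)
      = (((k - 1) * Nat.factorial (k - 1) : ℕ) : ℝ) := by push_cast; ring
  simp only [fstar, hempty, Finset.sum_empty, Nat.add_sub_cancel, hsplit, add_zero]
  rw [mul_div_assoc, ← mul_assoc, hjf]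
  have h1 : (Nat.factorial j : ℝ) * (1 / (Nat.factorial j : ℝ)) = 1 :=
    mul_one_div_cancel hfj
  have h2 : ((k - 1 : ℕ) : ℝ) * (Nat.factorial (k - 1) : ℝ) *
      (1 / (((k - 1) * Nat.factorial (k - 1) : ℕ) : ℝ)) = 1 := by
    rw [hkf, mul_one_div, div_self hN.ne']
  linear_combination (h1 - h2) *
    (1 / (1 / (((k - 1) * Nat.factorial (k - 1) : ℕ) : ℝ) +
      ∑ i ∈ Finset.Icc 1 (k - 1), (1 : ℝ) / (Nat.factorial i : ℝ)))
end

section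
/- The function k ↦ PoA*(k) := 1 - 1/(1/((k-1)(k-1)!) + Σ_{i=1}^{k-1} 1/i!) is strictly decreasing in the integer k ≥ 2, i.e. PoA*(k+1) < PoA*(k) for all k ≥ 2. -/
/-- The optimal price of anarchy over covering games of cardinality `k`. -/
noncomputable def poaStar (k : ℕ) : ℝ :=
  1 - 1 / (1 / (((k - 1) * Nat.factorial (k - 1) : ℕ) : ℝ) +
      ∑ i ∈ Finset.Icc 1 (k - 1), (1 : ℝ) / (Nat.factorial i : ℝ))

theorem stmt_5 (k : ℕ) (hk : 2 ≤ k) : poaStar (k + 1) < poaStar k := by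
  obtain ⟨a, rfl⟩ := Nat.exists_eq_add_of_le hk
  unfold poaStar
  have h1 : 2 + a + 1 - 1 = (a + 1) + 1 := by omega
  have h2 : 2 + a - 1 = a + 1 := by omega
  rw [h1, h2]
  set m := a + 1 with hm
  have hm1 : (1:ℝ) ≤ (m:ℝ) := by exact_mod_cast Nat.one_le_iff_ne_zero.mpr (by omega)
  have hF : (0:ℝ) < (Nat.factorial m : ℝ) := by exact_mod_cast Nat.factorial_pos m
  have hsum : ∑ i ∈ Finset.Icc 1 (m + 1), (1 : ℝ) / (Nat.factorial i : ℝ)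
      = (∑ i ∈ Finset.Icc 1 m, (1 : ℝ) / (Nat.factorial i : ℝ))
        + 1 / (Nat.factorial (m + 1) : ℝ) := by
    rw [Finset.sum_Icc_succ_top (by omega)]
  have hS : (0:ℝ) ≤ ∑ i ∈ Finset.Icc 1 m, (1 : ℝ) / (Nat.factorial i : ℝ) := by
    apply Finset.sum_nonneg
    intro i _
    positivity
  have key : 1 / (((m + 1) * Nat.factorial (m + 1) : ℕ) : ℝ)
      + 1 / (Nat.factorial (m + 1) : ℝ) < 1 / ((m * Nat.factorial m : ℕ) : ℝ) := by
    push_cast [Nat.factorial_succ]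
    rw [div_add_div _ _ (by positivity) (by positivity), div_lt_div_iff₀ (by positivity) (by positivity)]
    ring_nf
    have ha : (0:ℝ) ≤ (a:ℝ) := Nat.cast_nonneg a
    have hfa : (0:ℝ) < ((Nat.factorial a : ℕ):ℝ) := by exact_mod_cast Nat.factorial_pos a
    nlinarith [mul_nonneg ha (sq_nonneg ((Nat.factorial a : ℕ):ℝ)),
      mul_nonneg (mul_nonneg ha ha) (sq_nonneg ((Nat.factorial a : ℕ):ℝ)),
      mul_nonneg (mul_nonneg (mul_nonneg ha ha) ha) (sq_nonneg ((Nat.factorial a : ℕ):ℝ)),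
      mul_pos hfa hfa]
  have hDpos : (0:ℝ) < 1 / (((m + 1) * Nat.factorial (m + 1) : ℕ) : ℝ)
      + ∑ i ∈ Finset.Icc 1 (m + 1), (1 : ℝ) / (Nat.factorial i : ℝ) := by
    have : (0:ℝ) < (((m + 1) * Nat.factorial (m + 1) : ℕ) : ℝ) := by
      exact_mod_cast Nat.mul_pos (by omega) (Nat.factorial_pos _)
    rw [hsum]
    have h3 : (0:ℝ) < (Nat.factorial (m+1) : ℝ) := by exact_mod_cast Nat.factorial_pos _
    positivity
  have hDlt : 1 / (((m + 1) * Nat.factorial (m + 1) : ℕ) : ℝ)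
      + ∑ i ∈ Finset.Icc 1 (m + 1), (1 : ℝ) / (Nat.factorial i : ℝ)
      < 1 / ((m * Nat.factorial m : ℕ) : ℝ)
      + ∑ i ∈ Finset.Icc 1 m, (1 : ℝ) / (Nat.factorial i : ℝ) := by
    rw [hsum]
    linarith [key]
  have := one_div_lt_one_div_of_lt hDpos hDlt
  linarith
end

section
/- The quantity χ*(k) := (k-1)(k-1)! / (1 + (k-1)(k-1)!·Σ_{i=1}^{k-1} 1/i!) is strictly increasing in the integer k ≥ 2. -/
/-- The decay parameter `χ*(k) = χ(f*_k, k)` of the optimal distribution rule. -/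
noncomputable def chiStar (k : ℕ) : ℝ :=
  (((k - 1) * Nat.factorial (k - 1) : ℕ) : ℝ) /
    (1 + (((k - 1) * Nat.factorial (k - 1) : ℕ) : ℝ) *
      ∑ i ∈ Finset.Icc 1 (k - 1), (1 : ℝ) / (Nat.factorial i : ℝ))

theorem stmt_6 (k : ℕ) (hk : 2 ≤ k) : chiStar k < chiStar (k + 1) := by
  obtain ⟨m, rfl⟩ : ∃ m, k = m + 2 := ⟨k - 2, by omega⟩
  unfold chiStar
  have h1 : m + 2 - 1 = m + 1 := by omega
  have h2 : m + 2 + 1 - 1 = m + 2 := by omega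
  rw [h1, h2]
  set S : ℝ := ∑ i ∈ Finset.Icc 1 (m + 1), (1 : ℝ) / (Nat.factorial i : ℝ) with hS
  have hsum : ∑ i ∈ Finset.Icc 1 (m + 2), (1 : ℝ) / (Nat.factorial i : ℝ)
      = S + 1 / (Nat.factorial (m + 2) : ℝ) := by
    rw [hS, Finset.sum_Icc_succ_top (by omega : 1 ≤ m + 2)]
  rw [hsum]
  have hf1 : (0 : ℝ) < (Nat.factorial (m + 1) : ℝ) := by
    exact_mod_cast Nat.factorial_pos (m + 1)
  have hf2 : ((Nat.factorial (m + 2) : ℕ) : ℝ) = (m + 2) * (Nat.factorial (m + 1) : ℝ) := by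
    rw [Nat.factorial_succ]; push_cast; ring
  have hSnn : 0 ≤ S := Finset.sum_nonneg fun i _ => by positivity
  set a : ℝ := (((m + 1) * Nat.factorial (m + 1) : ℕ) : ℝ) with ha
  set b : ℝ := (((m + 2) * Nat.factorial (m + 2) : ℕ) : ℝ) with hb
  have haval : a = (m + 1) * (Nat.factorial (m + 1) : ℝ) := by rw [ha]; push_cast; ring
  have hbval : b = (m + 2) * ((m + 2) * (Nat.factorial (m + 1) : ℝ)) := by
    rw [hb]; push_cast [Nat.factorial_succ]; ring
  have hapos : 0 < a := by rw [haval]; positivity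
  have hbpos : 0 < b := by rw [hbval]; positivity
  have hd1 : 0 < 1 + a * S := by nlinarith
  have hd2 : 0 < 1 + b * (S + 1 / (Nat.factorial (m + 2) : ℝ)) := by
    have : 0 ≤ 1 / (Nat.factorial (m + 2) : ℝ) := by positivity
    nlinarith
  rw [div_lt_div_iff₀ hd1 hd2]
  have hinv : b * (1 / (Nat.factorial (m + 2) : ℝ)) = m + 2 := by
    rw [hbval]
    have h2f : ((Nat.factorial (m + 2) : ℕ) : ℝ) = (m + 2) * (Nat.factorial (m + 1) : ℝ) := hf2
    rw [h2f]
    field_simp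
  have key : a * (m + 3) < b := by
    rw [haval, hbval]; nlinarith
  nlinarith [mul_pos hapos hbpos]
end

section
/- For integers 1 < p < k̄, χ(f*_{k̄}, k̄) < χ(f'_p, k̄), where χ(f*_{k̄}, k̄) = (k̄-1)(k̄-1)! / (1 + (k̄-1)(k̄-1)!·Σ_{i=1}^{k̄-1} 1/i!) and χ(f'_p, k̄) = ((k̄-1)(k̄-1)! / (k̄ + (k̄-1)·Σ_{h=1}^{k̄-1-p} (k̄-1)!/(k̄-h-1)!)) · f*_p(p)/(p-1)!. -/
lemma tele_step (j : ℕ) (hj : 1 ≤ j) :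
    (1:ℝ)/(Nat.factorial (j+1)) <
      1/((j:ℝ) * Nat.factorial j) - 1/(((j:ℝ)+1) * Nat.factorial (j+1)) := by
  have hj' : (1:ℝ) ≤ (j:ℝ) := by exact_mod_cast hj
  have hx : (0:ℝ) < (j:ℝ) := by linarith
  have h1 : (0:ℝ) < (Nat.factorial j : ℝ) := by exact_mod_cast Nat.factorial_pos j
  have hfs : (Nat.factorial (j+1) : ℝ) = ((j:ℝ)+1) * Nat.factorial j := by
    rw [Nat.factorial_succ]; push_cast; ring
  have hA : (0:ℝ) < (j:ℝ) * Nat.factorial j := mul_pos hx h1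
  have hB : (0:ℝ) < ((j:ℝ)+1) * (((j:ℝ)+1) * Nat.factorial j) :=
    mul_pos (by linarith) (mul_pos (by linarith) h1)
  have hC : (0:ℝ) < ((j:ℝ)+1) * Nat.factorial j := mul_pos (by linarith) h1
  rw [hfs, div_sub_div _ _ hA.ne' hB.ne', div_lt_div_iff₀ hC (mul_pos hA hB)]
  nlinarith [mul_pos h1 h1, mul_pos (mul_pos h1 h1) hx]

lemma tele (m : ℕ) (hm : 1 ≤ m) (n : ℕ) (hn : m + 1 ≤ n) :
    ∑ i ∈ Finset.Icc (m+1) n, (1:ℝ)/(Nat.factorial i) <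
      1/((m:ℝ) * Nat.factorial m) - 1/((n:ℝ) * Nat.factorial n) := by
  induction n, hn using Nat.le_induction with
  | base =>
      have := tele_step m hm
      simp only [Finset.Icc_self, Finset.sum_singleton]
      push_cast at this ⊢
      linarith
  | succ n hn ih =>
      rw [Finset.sum_Icc_succ_top (by omega)]
      have hstep := tele_step n (by omega)
      push_cast at hstep ih ⊢
      linarith
/-- `χ(f'_p, k̄)` in closed form. -/
noncomputable def chiRisky (p k : ℕ) : ℝ :=
  ((((k - 1) * Nat.factorial (k - 1) : ℕ) : ℝ) /
      ((k : ℝ) + ((k - 1 : ℕ) : ℝ) *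
        ∑ h ∈ Finset.Icc 1 (k - 1 - p),
          (Nat.factorial (k - 1) : ℝ) / (Nat.factorial (k - h - 1) : ℝ))) *
    (fstar p p / (Nat.factorial (p - 1) : ℝ))

theorem stmt_7 (p k : ℕ) (hp : 1 < p) (hpk : p < k) :
    chiStar k < chiRisky p k := by
  obtain ⟨m, rfl⟩ : ∃ m, p = m + 1 := ⟨p - 1, by omega⟩
  obtain ⟨n, rfl⟩ : ∃ n, k = n + 2 := ⟨k - 2, by omega⟩
  have hm : 1 ≤ m := by omega
  have hmn : m < n + 1 := by omega
  have hm0 : (0:ℝ) < m := by exact_mod_cast hm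
  have hfq : (0:ℝ) < (Nat.factorial m : ℝ) := by exact_mod_cast Nat.factorial_pos m
  have hfn : (0:ℝ) < (Nat.factorial (n+1) : ℝ) := by exact_mod_cast Nat.factorial_pos (n+1)
  have hreindex : ∑ h ∈ Finset.Icc 1 (n - m),
      (Nat.factorial (n+1) : ℝ) / (Nat.factorial (n + 2 - h - 1) : ℝ)
      = ∑ j ∈ Finset.Icc (m+1) n, (Nat.factorial (n+1) : ℝ) / (Nat.factorial j : ℝ) := by
    apply Finset.sum_nbij' (i := fun h => n + 1 - h) (j := fun j => n + 1 - j)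
    · intro a ha; simp only [Finset.mem_Icc] at ha ⊢; omega
    · intro a ha; simp only [Finset.mem_Icc] at ha ⊢; omega
    · intro a ha; simp only [Finset.mem_Icc] at ha; omega
    · intro a ha; simp only [Finset.mem_Icc] at ha; omega
    · intro a ha; simp only [Finset.mem_Icc] at ha
      have : n + 2 - a - 1 = n + 1 - a := by omega
      rw [this]
  simp only [chiStar, chiRisky, fstar, Nat.add_sub_cancel,
    show n + 2 - 1 = n + 1 from by omega, show n + 2 - 1 - (m+1) = n - m from by omega,
    Finset.Icc_eq_empty_of_lt (by omega : m < m + 1), Finset.sum_empty, hreindex]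
  push_cast
  set Mq : ℝ := (m:ℝ) * Nat.factorial m with hMqdef
  set M : ℝ := ((n:ℝ)+1) * Nat.factorial (n+1) with hMdef
  have hMq : 0 < Mq := mul_pos hm0 hfq
  have hM : 0 < M := mul_pos (by positivity) hfn
  set Sq : ℝ := ∑ i ∈ Finset.Icc 1 m, (1:ℝ)/(Nat.factorial i) with hSqdef
  set Sn : ℝ := ∑ i ∈ Finset.Icc 1 (n+1), (1:ℝ)/(Nat.factorial i) with hSndef
  set σ : ℝ := ∑ i ∈ Finset.Icc (m+1) (n+1), (1:ℝ)/(Nat.factorial i) with hσdef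
  set τ : ℝ := ∑ j ∈ Finset.Icc (m+1) n, (Nat.factorial (n+1) : ℝ) / (Nat.factorial j : ℝ) with hτdef
  have hSq : 0 < Sq := by
    rw [hSqdef]
    apply Finset.sum_pos
    · intro i hi; positivity
    · exact ⟨1, by simp [Finset.mem_Icc]; omega⟩
  have hσ0 : 0 ≤ σ := Finset.sum_nonneg fun i _ => by positivity
  have hsplit : Sn = Sq + σ := by
    rw [hSndef, hSqdef, hσdef, show Finset.Icc 1 (n+1) = Finset.Ioc 0 (n+1) from Finset.Icc_add_one_left_eq_Ioc 0 (n+1),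
      show Finset.Icc 1 m = Finset.Ioc 0 m from Finset.Icc_add_one_left_eq_Ioc 0 m,
      show Finset.Icc (m+1) (n+1) = Finset.Ioc m (n+1) from Finset.Icc_add_one_left_eq_Ioc m (n+1)]
    exact (Finset.sum_Ioc_consecutive _ (by omega) (by omega)).symm
  have htele : σ < 1/Mq - 1/M := by
    have := tele m hm (n+1) (by omega)
    rw [hσdef, hMqdef, hMdef]
    push_cast at this ⊢
    linarith
  have hA : ((n:ℝ) + 2) + ((n:ℝ) + 1) * τ = 1 + M * σ := by
    have h1 : M * σ = ∑ j ∈ Finset.Icc (m+1) (n+1), M / (Nat.factorial j : ℝ) := by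
      rw [hσdef, Finset.mul_sum]
      exact Finset.sum_congr rfl fun j _ => by rw [mul_one_div]
    rw [h1, Finset.sum_Icc_succ_top (by omega : m + 1 ≤ n + 1)]
    have h2 : M / (Nat.factorial (n+1):ℝ) = (n:ℝ)+1 := by
      rw [hMdef]; field_simp
    have h3 : ∑ j ∈ Finset.Icc (m+1) n, M / (Nat.factorial j : ℝ) = ((n:ℝ)+1) * τ := by
      rw [hτdef, Finset.mul_sum, hMdef]
      exact Finset.sum_congr rfl fun j _ => by ring
    rw [h2, h3]
    ring
  have hMMqσ : Mq * M * σ < M - Mq := by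
    have h := mul_lt_mul_of_pos_left htele (mul_pos hMq hM)
    have he : Mq * M * (1/Mq - 1/M) = M - Mq := by field_simp
    rw [he] at h
    linarith
  have hkey : (1 + M * σ) * (1 + Mq * Sq) < 1 + M * Sn := by
    rw [hsplit]
    nlinarith [mul_lt_mul_of_pos_right hMMqσ hSq]
  have hpos1 : (0:ℝ) < 1 + M * Sn := by
    rw [hsplit]; nlinarith [mul_pos hM hSq, mul_nonneg hM.le hσ0]
  have hAσ : (0:ℝ) < 1 + M * σ := by nlinarith [mul_nonneg hM.le hσ0]
  have hBq : (0:ℝ) < 1 + Mq * Sq := by nlinarith [mul_pos hMq hSq]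
  have hpos2 : (0:ℝ) < (1 + M * σ) * (1 + Mq * Sq) := mul_pos hAσ hBq
  have e1 : (1:ℝ)/Mq + Sq = (1 + Mq*Sq)/Mq := by
    rw [add_div, mul_comm Mq Sq, mul_div_assoc, div_self hMq.ne', mul_one]
  have hfac : (Nat.factorial m : ℝ) * (1 / Mq + 0) / (1 / Mq + Sq) / (Nat.factorial m : ℝ)
      = 1 / (1 + Mq * Sq) := by
    rw [add_zero, mul_div_assoc,
      mul_comm ((Nat.factorial m : ℝ)) (1 / Mq / (1 / Mq + Sq)), mul_div_assoc,
      div_self hfq.ne', mul_one, e1, one_div Mq, div_div_eq_mul_div,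
      inv_mul_cancel₀ hMq.ne']
  rw [hreindex, hfac, div_mul_div_comm, mul_one, hA]
  exact div_lt_div_of_pos_left hM hpos2 hkey
end

section
/- Let χ > 0 and p < k̄ be positive integers, and define g : {p, p+1, ..., k̄} → ℝ by the backward recursion g(k̄) = χ/(k̄-1) and j·g(j) - g(j+1) = χ for p ≤ j ≤ k̄-1. Then for all j with p ≤ j ≤ k̄-1, j·g(j) - (j+1)·g(j+1) ≥ 0. -/
theorem stmt_8 (χ : ℝ) (hχ : 0 < χ) (p k : ℕ) (hp : 0 < p) (hpk : p < k)
    (g : ℕ → ℝ) (hgk : g k = χ / ((k - 1 : ℕ) : ℝ))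
    (hrec : ∀ j : ℕ, p ≤ j → j ≤ k - 1 → (j : ℝ) * g j - g (j + 1) = χ) :
    ∀ j : ℕ, p ≤ j → j ≤ k - 1 →
      0 ≤ (j : ℝ) * g j - ((j + 1 : ℕ) : ℝ) * g (j + 1) := by
  have hk2 : 2 ≤ k := by omega
  have key : ∀ m j, p ≤ j → j ≤ k → k - j = m →
      0 ≤ g j ∧ ((j : ℝ) - 1) * g j ≤ χ := by
    intro m
    induction m with
    | zero =>
      intro j hpj hjk hm
      have hjeq : j = k := by omega
      subst hjeq
      have hkc : ((j - 1 : ℕ) : ℝ) = (j : ℝ) - 1 := by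
        have : 1 ≤ j := by omega
        push_cast [Nat.cast_sub this]
        ring
      have hpos : (0 : ℝ) < (j : ℝ) - 1 := by
        have : (1 : ℕ) < j := by omega
        have : (1 : ℝ) < (j : ℝ) := by exact_mod_cast this
        linarith
      rw [hgk, hkc]
      constructor
      · positivity
      · rw [mul_comm, div_mul_cancel₀ χ (ne_of_gt hpos)]
    | succ n ih =>
      intro j hpj hjk hm
      have hjk1 : j ≤ k - 1 := by omega
      have h1 := hrec j hpj hjk1
      obtain ⟨h2a, h2b⟩ := ih (j + 1) (by omega) (by omega) (by omega)
      have hcast : ((j + 1 : ℕ) : ℝ) - 1 = (j : ℝ) := by push_cast; ring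
      rw [hcast] at h2b
      have hjpos : (0 : ℝ) < (j : ℝ) := by exact_mod_cast (by omega : 0 < j)
      constructor
      · nlinarith [h1, h2a, hjpos, hχ]
      · nlinarith [h1, h2a, h2b, hjpos, hχ]
  intro j hpj hjk
  have h1 := hrec j hpj hjk
  obtain ⟨h2a, h2b⟩ := key (k - (j + 1)) (j + 1) (by omega) (by omega) rfl
  have hcast : ((j + 1 : ℕ) : ℝ) - 1 = (j : ℝ) := by push_cast; ring
  rw [hcast] at h2b
  have : ((j + 1 : ℕ) : ℝ) = (j : ℝ) + 1 := by push_cast; ring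
  rw [this]
  linarith
end

section
/- Let χ > 0 and p < k̄ be positive integers, and define g(j) for p ≤ j ≤ k̄ by g(k̄) = χ/(k̄-1) and j·g(j) = χ + g(j+1) for p ≤ j ≤ k̄-1. Then the explicit formula j·g(j) = χ·(1 + Σ_{i=j+1}^{k̄-1} j!/i! + j!/((k̄-1)(k̄-1)!)) holds for all p ≤ j ≤ k̄-1. -/
theorem stmt_9 (χ : ℝ) (hχ : 0 < χ) (p k : ℕ) (hp : 0 < p) (hpk : p < k)
    (g : ℕ → ℝ) (hgk : g k = χ / ((k - 1 : ℕ) : ℝ))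
    (hrec : ∀ j : ℕ, p ≤ j → j ≤ k - 1 → (j : ℝ) * g j = χ + g (j + 1)) :
    ∀ j : ℕ, p ≤ j → j ≤ k - 1 →
      (j : ℝ) * g j =
        χ * (1 + (∑ i ∈ Finset.Icc (j + 1) (k - 1),
            (Nat.factorial j : ℝ) / (Nat.factorial i : ℝ)) +
          (Nat.factorial j : ℝ) / (((k - 1) * Nat.factorial (k - 1) : ℕ) : ℝ)) := by
  have hk2 : 2 ≤ k := by omega
  have hk1 : (1:ℕ) ≤ k - 1 := by omega
  have hkne : ((k - 1 : ℕ) : ℝ) ≠ 0 := by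
    exact_mod_cast Nat.one_le_iff_ne_zero.mp hk1
  have hfacne : ∀ n : ℕ, ((Nat.factorial n : ℕ) : ℝ) ≠ 0 := by
    intro n; exact_mod_cast (Nat.factorial_pos n).ne'
  suffices h : ∀ d j : ℕ, p ≤ j → j ≤ k - 1 → k - 1 - j = d →
      (j : ℝ) * g j =
        χ * (1 + (∑ i ∈ Finset.Icc (j + 1) (k - 1),
            (Nat.factorial j : ℝ) / (Nat.factorial i : ℝ)) +
          (Nat.factorial j : ℝ) / (((k - 1) * Nat.factorial (k - 1) : ℕ) : ℝ)) by
    intro j h1 h2; exact h (k - 1 - j) j h1 h2 rfl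
  intro d
  induction d with
  | zero =>
    intro j h1 h2 hd
    have hj : j = k - 1 := by omega
    subst hj
    rw [Finset.Icc_eq_empty (by omega), Finset.sum_empty]
    rw [hrec (k-1) h1 le_rfl]
    have hkk : k - 1 + 1 = k := by omega
    rw [hkk, hgk, Nat.cast_mul]
    rw [mul_comm ((k - 1 : ℕ) : ℝ), ← div_div, div_self (hfacne _)]
    ring
  | succ d ih =>
    intro j h1 h2 hd
    have hjlt : j + 1 ≤ k - 1 := by omega
    have hIH := ih (j + 1) (by omega) hjlt (by omega)
    rw [hrec j h1 h2]
    rw [Finset.Icc_eq_cons_Ioc hjlt, Finset.sum_cons]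
    rw [show Finset.Icc (j + 1 + 1) (k - 1) = Finset.Ioc (j + 1) (k - 1) from
      Finset.Icc_add_one_left_eq_Ioc _ _] at hIH
    have hj1 : ((j : ℝ) + 1) ≠ 0 := by positivity
    -- rewrite sums of j!/i! in terms of (j+1)!/i!
    have hsum : ∑ i ∈ Finset.Ioc (j + 1) (k - 1), (Nat.factorial j : ℝ) / (Nat.factorial i : ℝ)
        = (∑ i ∈ Finset.Ioc (j + 1) (k - 1),
            (Nat.factorial (j + 1) : ℝ) / (Nat.factorial i : ℝ)) / ((j : ℝ) + 1) := by
      rw [Finset.sum_div]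
      refine Finset.sum_congr rfl fun i _ => ?_
      rw [Nat.factorial_succ]
      push_cast
      field_simp
    rw [hsum]
    set A := ∑ i ∈ Finset.Ioc (j + 1) (k - 1),
        (Nat.factorial (j + 1) : ℝ) / (Nat.factorial i : ℝ) with hA
    have hg : g (j + 1) = χ * (1 + A + (Nat.factorial (j + 1) : ℝ) /
        (((k - 1) * Nat.factorial (k - 1) : ℕ) : ℝ)) / ((j : ℝ) + 1) := by
      rw [eq_div_iff hj1]
      rw [← hIH]
      push_cast
      ring
    rw [hg, Nat.factorial_succ]
    push_cast
    have hden : ((k - 1 : ℕ) : ℝ) * ((Nat.factorial (k - 1) : ℕ) : ℝ) ≠ 0 :=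
      mul_ne_zero hkne (hfacne _)
    field_simp
    ring
end

section
/- Let 1 < p < k̄ and define f'_p : {1,...,k̄} → ℝ≥0 by f'_p(j) = f*_p(j) for j ≤ p and by the backward recursion j·f'_p(j) - f'_p(j+1) = χ' for p ≤ j ≤ k̄-1 with (k̄-1)·f'_p(k̄) = χ', where χ' = ((k̄-1)(k̄-1)!/(k̄ + (k̄-1)·Σ_{h=1}^{k̄-1-p}(k̄-1)!/(k̄-h-1)!))·f*_p(p)/(p-1)!. Then f'_p is non-increasing on {1,...,k̄}. -/
/-- Telescoping estimate: `1/(b·b!) + ∑_{i=a+1}^{b} 1/i! ≤ 1/(a·a!)`. -/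
lemma tele_aux (a b : ℕ) (ha : 1 ≤ a) (hab : a ≤ b) :
    1 / ((b : ℝ) * (Nat.factorial b : ℝ)) +
      ∑ i ∈ Finset.Icc (a + 1) b, (1 : ℝ) / (Nat.factorial i : ℝ) ≤
    1 / ((a : ℝ) * (Nat.factorial a : ℝ)) := by
  induction b, hab using Nat.le_induction with
  | base =>
      rw [Finset.Icc_eq_empty (by omega), Finset.sum_empty]; simp
  | succ b hab ih =>
      rw [Finset.sum_Icc_succ_top (by omega)]
      have hb1 : (1:ℝ) ≤ (b:ℝ) := by exact_mod_cast ha.trans hab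
      have hF : (0:ℝ) < (Nat.factorial b : ℝ) := by
        exact_mod_cast Nat.factorial_pos b
      have key : 1 / (((b:ℝ)+1) * (Nat.factorial (b+1) : ℝ)) +
          1 / (Nat.factorial (b+1) : ℝ) ≤ 1 / ((b:ℝ) * (Nat.factorial b : ℝ)) := by
        have hfs : (Nat.factorial (b+1) : ℝ) = ((b:ℝ)+1) * (Nat.factorial b : ℝ) := by
          push_cast [Nat.factorial_succ]; ring
        rw [hfs, div_add_div _ _ (by positivity) (by positivity),
          div_le_div_iff₀ (by positivity) (by positivity)]
        ring_nf
        nlinarith [sq_nonneg ((b:ℝ)), hF, hb1]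
      push_cast at key ⊢
      linarith

/-- `f*_p` is non-increasing on `{1, …, p}`. -/
lemma fstar_mono_aux (p j : ℕ) (hp : 1 < p) (hj : 1 ≤ j) (hjp : j ≤ p - 1) :
    fstar p (j + 1) ≤ fstar p j := by
  unfold fstar
  set c : ℝ := 1 / (((p - 1) * Nat.factorial (p - 1) : ℕ) : ℝ) with hc
  have hX : (0:ℝ) < (((p - 1) * Nat.factorial (p - 1) : ℕ) : ℝ) := by
    exact_mod_cast Nat.mul_pos (by omega) (Nat.factorial_pos _)
  have hc0 : 0 < c := by rw [hc]; positivity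
  have hD : 0 < c + ∑ i ∈ Finset.Icc 1 (p - 1), (1:ℝ) / (Nat.factorial i : ℝ) := by
    have : (0:ℝ) ≤ ∑ i ∈ Finset.Icc 1 (p - 1), (1:ℝ) / (Nat.factorial i : ℝ) :=
      Finset.sum_nonneg fun i _ => by positivity
    linarith
  rw [div_le_div_iff₀ hD hD]
  apply mul_le_mul_of_nonneg_right _ hD.le
  rw [Finset.Icc_eq_cons_Ioc hjp, Finset.sum_cons, ← Finset.Icc_add_one_left_eq_Ioc]
  simp only [Nat.add_sub_cancel]
  set S : ℝ := ∑ i ∈ Finset.Icc (j + 1) (p - 1), (1:ℝ) / (Nat.factorial i : ℝ) with hS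
  have hS0 : 0 ≤ S := Finset.sum_nonneg fun i _ => by positivity
  have hT : c + S ≤ 1 / ((j : ℝ) * (Nat.factorial j : ℝ)) := by
    have := tele_aux j (p - 1) hj hjp
    rw [hc]
    have hcast : (((p - 1) * Nat.factorial (p - 1) : ℕ) : ℝ)
        = ((p - 1 : ℕ) : ℝ) * (Nat.factorial (p - 1) : ℝ) := by push_cast; ring
    rw [hcast]
    linarith
  have hjR : (1:ℝ) ≤ (j:ℝ) := by exact_mod_cast hj
  have hfj : (0:ℝ) < (Nat.factorial j : ℝ) := by exact_mod_cast Nat.factorial_pos j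
  have hfj1 : (0:ℝ) < (Nat.factorial (j-1) : ℝ) := by exact_mod_cast Nat.factorial_pos _
  have hfac : (Nat.factorial j : ℝ) = (j : ℝ) * (Nat.factorial (j - 1) : ℝ) := by
    have := Nat.mul_factorial_pred (by omega : j ≠ 0)
    exact_mod_cast this.symm
  calc (Nat.factorial j : ℝ) * (c + S)
      ≤ (Nat.factorial j : ℝ) * (1 / ((j : ℝ) * (Nat.factorial j : ℝ))) :=
        mul_le_mul_of_nonneg_left hT hfj.le
    _ = (Nat.factorial (j-1) : ℝ) * (1 / (Nat.factorial j : ℝ)) := by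
        rw [hfac]; field_simp
    _ ≤ (Nat.factorial (j-1) : ℝ) * (c + (1 / (Nat.factorial j : ℝ) + S)) := by
        nlinarith [mul_nonneg hfj1.le (add_nonneg hc0.le hS0)]

lemma chiRisky_nonneg (p k : ℕ) : 0 ≤ chiRisky p k := by
  unfold chiRisky fstar
  positivity

theorem stmt_14 (p k : ℕ) (hp : 1 < p) (hpk : p < k) (f : ℕ → ℝ)
    (hhead : ∀ j ∈ Finset.Icc 1 p, f j = fstar p j)
    (hrec : ∀ j : ℕ, p ≤ j → j ≤ k - 1 → (j : ℝ) * f j - f (j + 1) = chiRisky p k)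
    (htail : ((k - 1 : ℕ) : ℝ) * f k = chiRisky p k) :
    ∀ j : ℕ, 1 ≤ j → j ≤ k - 1 → f (j + 1) ≤ f j := by
  have hk3 : 3 ≤ k := by omega
  have hχ : 0 ≤ chiRisky p k := chiRisky_nonneg p k
  set χ := chiRisky p k with hχdef
  -- downward induction on the tail
  have key : ∀ m : ℕ, ∀ j : ℕ, p ≤ j → j + m = k - 1 →
      0 ≤ f j ∧ ((j : ℝ) - 1) * f j ≤ χ := by
    intro m
    induction m with
    | zero =>
        intro j hpj hjm
        have hj : j = k - 1 := by omega
        subst hj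
        have h1 := hrec (k - 1) hpj le_rfl
        have hk1 : ((k - 1 : ℕ) : ℝ) = (k : ℝ) - 1 := by
          push_cast [Nat.cast_sub (by omega : 1 ≤ k)]; ring
        have hsucc : k - 1 + 1 = k := by omega
        rw [hsucc] at h1
        have hkR : (3:ℝ) ≤ (k:ℝ) := by exact_mod_cast hk3
        rw [hk1] at h1 htail ⊢
        have hkpos : (0:ℝ) < (k:ℝ) - 1 := by linarith
        have hfk : f k = χ / ((k:ℝ) - 1) := by
          field_simp
          linarith
        have hfk0 : 0 ≤ f k := by rw [hfk]; positivity
        have hfk1 : f (k - 1) = (χ + f k) / ((k:ℝ) - 1) := by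
          field_simp
          linarith
        constructor
        · rw [hfk1]; positivity
        · rw [hfk1, hfk]
          have hexp : (χ + χ / ((k:ℝ) - 1)) / ((k:ℝ) - 1) = χ * (k:ℝ) / (((k:ℝ) - 1)^2) := by
            field_simp; ring
          rw [hexp, ← mul_div_assoc, div_le_iff₀ (by positivity : (0:ℝ) < ((k:ℝ)-1)^2)]
          nlinarith
    | succ n ih =>
        intro j hpj hjm
        obtain ⟨h0, h1⟩ := ih (j + 1) (by omega) (by omega)
        have he := hrec j hpj (by omega)
        have hjR : (2:ℝ) ≤ (j:ℝ) := by exact_mod_cast (by omega : 2 ≤ j)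
        push_cast at h1
        constructor
        · nlinarith
        · nlinarith
  intro j hj1 hjk
  by_cases hjp : j < p
  · rw [hhead j (Finset.mem_Icc.mpr ⟨hj1, by omega⟩),
      hhead (j + 1) (Finset.mem_Icc.mpr ⟨by omega, by omega⟩)]
    exact fstar_mono_aux p j hp hj1 (by omega)
  · push_neg at hjp
    obtain ⟨h0, h1⟩ := key (k - 1 - j) j hjp (by omega)
    have he := hrec j hjp hjk
    linarith
end

section
/- Consider a covering game with player set N = {1,...,n}, resource set R, action sets A_i ⊆ 2^R, values v_r ≥ 0, and utilities u^i(a) = Σ_{r ∈ a_i} v_r·f(|a|_r) for a non-increasing f : {1,...,k} → ℝ≥0 with f(1)=1, where k bounds max_r |a|_r over all allocations. If a_e is a pure Nash equilibrium and a_opt is a welfare-optimal allocation, then (1 + χ(f,k))·W(a_e) ≥ W(a_opt), where W(a) = Σ_{r : |a|_r ≥ 1} v_r and χ(f,k) = max({j·f(j)-f(j+1) : 1 ≤ j ≤ k-1} ∪ {(k-1)·f(k)}). -/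
open Finset

variable {R : Type*} [Fintype R] [DecidableEq R]

/-- Number of players selecting resource `r` in allocation `a`. -/
def coverCount {n : ℕ} (a : Fin n → Finset R) (r : R) : ℕ :=
  (Finset.univ.filter fun i => r ∈ a i).card

/-- Welfare: total value of covered resources. -/
def welfare {n : ℕ} (v : R → ℝ) (a : Fin n → Finset R) : ℝ :=
  ∑ r ∈ Finset.univ.filter (fun r => 1 ≤ coverCount a r), v r

/-- Utility of player `i` under distribution rule `f`. -/
def utility {n : ℕ} (v : R → ℝ) (f : ℕ → ℝ) (a : Fin n → Finset R) (i : Fin n) : ℝ :=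
  ∑ r ∈ a i, v r * f (coverCount a r)

/-- Feasibility of an allocation with respect to action sets `A`. -/
def feasible {n : ℕ} (A : Fin n → Finset (Finset R)) (a : Fin n → Finset R) : Prop :=
  ∀ i, a i ∈ A i

/-- `χ(f,k)`: the maximum of `{j·f(j) - f(j+1) : 1 ≤ j ≤ k-1} ∪ {(k-1)·f(k)}`. -/
noncomputable def chi (f : ℕ → ℝ) (k : ℕ) : ℝ :=
  (Finset.Icc 1 (k - 1)).fold max (((k - 1 : ℕ) : ℝ) * f k)
    (fun j : ℕ => (j : ℝ) * f j - f (j + 1))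


set_option linter.unusedSectionVars false

lemma coverUpdate {n : ℕ} (a : Fin n → Finset R) (i : Fin n) (b : Finset R) (r : R) :
    coverCount (Function.update a i b) r + (if r ∈ a i then 1 else 0)
      = coverCount a r + (if r ∈ b then 1 else 0) := by
  classical
  unfold coverCount
  rw [Finset.card_filter, Finset.card_filter]
  have h1 : (fun j => if r ∈ Function.update a i b j then 1 else 0)
      = Function.update (fun j => if r ∈ a j then 1 else 0) i (if r ∈ b then 1 else 0) := by
    funext j
    by_cases hj : j = i
    · subst hj; simp
    · simp [Function.update_of_ne hj]
  rw [h1, Finset.sum_update_of_mem (Finset.mem_univ i)]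
  have h2 : ∑ j, (if r ∈ a j then 1 else 0)
      = (if r ∈ a i then 1 else 0) + ∑ j ∈ Finset.univ \ {i}, (if r ∈ a j then 1 else 0) := by
    rw [← Finset.sum_update_of_mem (Finset.mem_univ i)]
    congr 1
    funext j
    by_cases hj : j = i
    · subst hj; simp
    · simp [Function.update_of_ne hj]
  omega

lemma sum_mem_eq {n : ℕ} (a : Fin n → Finset R) (t : R → ℝ) :
    ∑ i, ∑ r ∈ a i, t r = ∑ r, (coverCount a r : ℝ) * t r := by
  classical
  have h : ∀ i, ∑ r ∈ a i, t r = ∑ r, if r ∈ a i then t r else 0 := by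
    intro i
    rw [Finset.sum_ite_mem, Finset.univ_inter]
  simp_rw [h]
  rw [Finset.sum_comm]
  congr 1
  funext r
  rw [← Finset.sum_filter, Finset.sum_const, nsmul_eq_mul]
  rfl

theorem stmt_16 {n : ℕ} (A : Fin n → Finset (Finset R)) (v : R → ℝ)
    (hv : ∀ r, 0 ≤ v r) (k : ℕ) (hk : 2 ≤ k) (f : ℕ → ℝ)
    (hnonneg : ∀ j ∈ Finset.Icc 1 k, 0 ≤ f j) (hone : f 1 = 1)
    (hmono : ∀ j : ℕ, 1 ≤ j → j ≤ k - 1 → f (j + 1) ≤ f j)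
    (hcard : ∀ a : Fin n → Finset R, feasible A a → ∀ r, coverCount a r ≤ k)
    (ae : Fin n → Finset R) (hae : feasible A ae)
    (heq : ∀ i : Fin n, ∀ b ∈ A i,
      utility v f (Function.update ae i b) i ≤ utility v f ae i)
    (aopt : Fin n → Finset R) (hopt : feasible A aopt)
    (hbest : ∀ a : Fin n → Finset R, feasible A a → welfare v a ≤ welfare v aopt) :
    welfare v aopt ≤ (1 + chi f k) * welfare v ae := by
  classical
  set g : ℕ → ℝ := fun j => f (min (j + 1) k) with hg
  -- f j ≤ 1 for 1 ≤ j ≤ k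
  have hfle1 : ∀ j, 1 ≤ j → j ≤ k → f j ≤ 1 := by
    intro j hj1 hjk
    induction j with
    | zero => omega
    | succ m ih =>
      rcases Nat.eq_or_lt_of_le hj1 with h | h
      · rw [← h, hone]
      · have hm1 : 1 ≤ m := by omega
        have hmk : m ≤ k - 1 := by omega
        calc f (m + 1) ≤ f m := hmono m hm1 hmk
          _ ≤ 1 := ih hm1 (by omega)
  have hg0 : ∀ j, 0 ≤ g j := by
    intro j
    apply hnonneg
    rw [Finset.mem_Icc]
    omega
  have hg1 : ∀ j, g j ≤ 1 := by
    intro j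
    apply hfle1 <;> omega
  have hgzero : g 0 = 1 := by
    have hm : min (0 + 1) k = 1 := by omega
    rw [hg]
    simp only [hm, hone]
  -- chi bound
  have hchi : ∀ j, 1 ≤ j → j ≤ k → (j : ℝ) * f j - g j ≤ chi f k := by
    intro j hj1 hjk
    unfold chi
    rw [Finset.le_fold_max]
    rcases Nat.eq_or_lt_of_le hjk with h | h
    · left
      subst h
      have hmin : min (j + 1) j = j := by omega
      rw [hg]
      simp only [hmin]
      rw [Nat.cast_sub (by omega : 1 ≤ j), Nat.cast_one]
      have : ((j : ℝ) - 1) * f j = (j : ℝ) * f j - f j := by ring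
      rw [this]
    · right
      refine ⟨j, Finset.mem_Icc.mpr ⟨hj1, by omega⟩, ?_⟩
      have hmin : min (j + 1) k = j + 1 := by omega
      rw [hg]
      simp only [hmin]
      exact le_refl _
  have hxk : ∀ r, coverCount ae r ≤ k := fun r => hcard ae hae r
  -- per player inequality
  have hplayer : ∀ i : Fin n, ∑ r ∈ aopt i, v r * g (coverCount ae r) ≤ utility v f ae i := by
    intro i
    have hdevfeas : feasible A (Function.update ae i (aopt i)) := by
      intro j
      by_cases hj : j = i
      · rw [hj, Function.update_self]; exact hopt i
      · rw [Function.update_of_ne hj]; exact hae j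
    refine le_trans ?_ (heq i (aopt i) (hopt i))
    unfold utility
    rw [Function.update_self]
    apply Finset.sum_le_sum
    intro r hr
    apply mul_le_mul_of_nonneg_left _ (hv r)
    have hcu := coverUpdate ae i (aopt i) r
    rw [if_pos hr] at hcu
    by_cases hrae : r ∈ ae i
    · rw [if_pos hrae] at hcu
      have hceq : coverCount (Function.update ae i (aopt i)) r = coverCount ae r := by omega
      rw [hceq]
      have hx1 : 1 ≤ coverCount ae r :=
        Finset.card_pos.mpr ⟨i, Finset.mem_filter.mpr ⟨Finset.mem_univ i, hrae⟩⟩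
      rcases Nat.eq_or_lt_of_le (hxk r) with h | h
      · have hmin : min (coverCount ae r + 1) k = coverCount ae r := by omega
        rw [hg]
        simp only [hmin]
        exact le_refl _
      · have hmin : min (coverCount ae r + 1) k = coverCount ae r + 1 := by omega
        rw [hg]
        simp only [hmin]
        exact hmono (coverCount ae r) hx1 (by omega)
    · rw [if_neg hrae] at hcu
      have hceq : coverCount (Function.update ae i (aopt i)) r = coverCount ae r + 1 := by
        omega
      have hle : coverCount ae r + 1 ≤ k := by
        rw [← hceq]; exact hcard _ hdevfeas r
      have hmin : min (coverCount ae r + 1) k = coverCount ae r + 1 := by omega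
      rw [hceq, hg]
      simp only [hmin]
      exact le_refl _
  -- summed Nash
  have hS1 : ∑ r, (coverCount aopt r : ℝ) * (v r * g (coverCount ae r))
      ≤ ∑ r, (coverCount ae r : ℝ) * (v r * f (coverCount ae r)) := by
    rw [← sum_mem_eq aopt (fun r => v r * g (coverCount ae r))]
    calc ∑ i, ∑ r ∈ aopt i, v r * g (coverCount ae r) ≤ ∑ i, utility v f ae i :=
          Finset.sum_le_sum fun i _ => hplayer i
      _ = ∑ r, (coverCount ae r : ℝ) * (v r * f (coverCount ae r)) := by
          unfold utility
          exact sum_mem_eq ae (fun r => v r * f (coverCount ae r))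
  set Fx := Finset.univ.filter (fun r => 1 ≤ coverCount ae r) with hFx
  set Fy := Finset.univ.filter (fun r => 1 ≤ coverCount aopt r) with hFy
  -- welfare opt ≤ S1 + T
  have hsplit : welfare v aopt ≤ (∑ r, (coverCount aopt r : ℝ) * (v r * g (coverCount ae r)))
      + ∑ r ∈ Fx, v r * (1 - g (coverCount ae r)) := by
    unfold welfare
    have heq1 : ∀ r ∈ Fy, v r = v r * g (coverCount ae r) + v r * (1 - g (coverCount ae r)) := by
      intro r _; ring
    rw [Finset.sum_congr rfl heq1, Finset.sum_add_distrib]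
    apply add_le_add
    · calc ∑ r ∈ Fy, v r * g (coverCount ae r)
          ≤ ∑ r ∈ Fy, (coverCount aopt r : ℝ) * (v r * g (coverCount ae r)) := by
            apply Finset.sum_le_sum
            intro r hr
            have h1 : 1 ≤ coverCount aopt r := by
              have := (Finset.mem_filter.mp (hFy ▸ hr)).2
              exact this
            have h1' : (1 : ℝ) ≤ (coverCount aopt r : ℝ) := by exact_mod_cast h1
            nlinarith [mul_nonneg (hv r) (hg0 (coverCount ae r))]
        _ ≤ ∑ r, (coverCount aopt r : ℝ) * (v r * g (coverCount ae r)) := by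
            apply Finset.sum_le_sum_of_subset_of_nonneg
            · rw [hFy]; exact Finset.filter_subset _ _
            · intro r _ _
              exact mul_nonneg (Nat.cast_nonneg _)
                (mul_nonneg (hv r) (hg0 (coverCount ae r)))
    · have hB : ∑ r ∈ Fy, v r * (1 - g (coverCount ae r))
          = ∑ r ∈ Fy.filter (fun r => 1 ≤ coverCount ae r),
              v r * (1 - g (coverCount ae r)) := by
        symm
        apply Finset.sum_filter_of_ne
        intro r _ hne
        by_contra hc
        have h0 : coverCount ae r = 0 := by omega
        rw [h0, hgzero] at hne
        simp at hne
      rw [hB]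
      apply Finset.sum_le_sum_of_subset_of_nonneg
      · intro r hr
        rw [Finset.mem_filter] at hr
        rw [hFx, Finset.mem_filter]
        exact ⟨Finset.mem_univ r, hr.2⟩
      · intro r hr _
        have h1 : 1 ≤ coverCount ae r := by
          have := (Finset.mem_filter.mp (hFx ▸ hr)).2
          exact this
        have := hg1 (coverCount ae r)
        nlinarith [hv r]
  -- final bound
  have hfinal : (∑ r, (coverCount ae r : ℝ) * (v r * f (coverCount ae r)))
      + (∑ r ∈ Fx, v r * (1 - g (coverCount ae r)))
      ≤ (1 + chi f k) * welfare v ae := by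
    have hres : ∑ r, (coverCount ae r : ℝ) * (v r * f (coverCount ae r))
        = ∑ r ∈ Fx, (coverCount ae r : ℝ) * (v r * f (coverCount ae r)) := by
      symm
      rw [hFx]
      apply Finset.sum_filter_of_ne
      intro r _ hne
      by_contra hc
      have h0 : coverCount ae r = 0 := by omega
      rw [h0] at hne
      simp at hne
    rw [hres, ← Finset.sum_add_distrib]
    unfold welfare
    rw [Finset.mul_sum]
    apply Finset.sum_le_sum
    intro r hr
    have h1 : 1 ≤ coverCount ae r := by
      have := (Finset.mem_filter.mp (hFx ▸ hr)).2
      exact this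
    have hc := hchi (coverCount ae r) h1 (hxk r)
    have hvr := hv r
    nlinarith
  linarith
end
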